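/- For every ε ∈ (0,1) the following holds. Let (X,d) be a metric space and let f_i : X → [0,1] (i ∈ ℤ) be functions such that Σ_{i∈ℤ} 2^i·|f_i(x) − f_i(y)| < ∞ for all x,y ∈ X. Then there is a map F : X → ℝ^{2+⌈log₂(1/ε)⌉} with the ℓ₁ norm such that for all x,y ∈ X: (1−ε)·Σ_{i∈ℤ} 2^i·|f_i(x)−f_i(y)| − 2·ζ(x,y) ≤ ‖F(x)−F(y)‖₁ ≤ Σ_{i∈ℤ} 2^i·|f_i(x)−f_i(y)|. -/

import Mathlib

open scoped Classical

private noncomputable def ind (p : Prop) (x : ℝ) : ℝ := if p then x else 0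

private lemma ind_pos {p : Prop} (h : p) (x : ℝ) : ind p x = x := if_pos h
private lemma ind_neg {p : Prop} (h : ¬ p) (x : ℝ) : ind p x = 0 := if_neg h
private lemma abs_ind (p : Prop) (x : ℝ) : |ind p x| = ind p |x| := by
  by_cases h : p <;> simp [ind, h]

private lemma ind_nonneg {p : Prop} {x : ℝ} (h : 0 ≤ x) : 0 ≤ ind p x := by
  by_cases hp : p <;> simp [ind, hp, h]

private lemma summable_ind_of_le {a : ℤ → ℝ} (u : ℤ → ℝ) (hA : Summable fun i => |a i|)
    (P : ℤ → Prop) (hu : ∀ i, P i → |u i| ≤ |a i|) :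
    Summable (fun i => ind (P i) (u i)) := by
  apply Summable.of_norm_bounded hA
  intro i
  by_cases h : P i
  · simpa [ind, h, Real.norm_eq_abs] using hu i h
  · simp [ind, h, abs_nonneg]

private lemma tsum_ind_split (u : ℤ → ℝ) (P Q : ℤ → Prop)
    (h1 : Summable (fun i => ind (P i ∧ Q i) (u i)))
    (h2 : Summable (fun i => ind (P i ∧ ¬ Q i) (u i))) :
    ∑' i, ind (P i) (u i) =
      (∑' i, ind (P i ∧ Q i) (u i)) + ∑' i, ind (P i ∧ ¬ Q i) (u i) := by
  rw [← Summable.tsum_add h1 h2]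
  exact tsum_congr fun i => by by_cases hP : P i <;> by_cases hQ : Q i <;> simp [ind, hP, hQ]

private lemma abs_tsum_subsingleton0 (g : ℤ → ℝ)
    (h : ∀ i j, g i ≠ 0 → g j ≠ 0 → i = j) :
    |∑' i, g i| = ∑' i, |g i| := by
  by_cases he : ∃ i, g i ≠ 0
  · obtain ⟨i0, hi0⟩ := he
    have h1 : ∀ b, b ≠ i0 → g b = 0 := fun b hb => by
      by_contra hgb; exact hb (h b i0 hgb hi0)
    rw [tsum_eq_single i0 h1, tsum_eq_single i0 (fun b hb => by rw [h1 b hb, abs_zero])]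
  · push_neg at he
    simp only [he, abs_zero, tsum_zero]

private lemma geom_summable0 (J : ℤ) :
    Summable (fun i : ℤ => ind (i ≤ J) ((2:ℝ)^i)) ∧
    ∑' i : ℤ, ind (i ≤ J) ((2:ℝ)^i) = 2^(J+1) := by
  have hinj : Function.Injective (fun k : ℕ => J - (k:ℤ)) := by
    intro p q h; simp only at h; omega
  have hsupp : Function.support (fun i : ℤ => ind (i ≤ J) ((2:ℝ)^i))
      ⊆ Set.range (fun k : ℕ => J - (k:ℤ)) := by
    intro i hi
    have : i ≤ J := by
      by_contra hc; simp [ind, hc] at hi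
    refine ⟨(J - i).toNat, ?_⟩
    show J - ((J - i).toNat : ℤ) = i
    omega
  have hcomp : (fun k : ℕ => (fun i : ℤ => ind (i ≤ J) ((2:ℝ)^i)) (J - (k:ℤ)))
      = fun k : ℕ => (2:ℝ)^(J+1) * (1/2)^(k+1) := by
    funext k
    have h1 : J - (k:ℤ) ≤ J := by omega
    show ind (J - (k:ℤ) ≤ J) ((2:ℝ)^(J - (k:ℤ))) = _
    rw [ind_pos h1]
    rw [show J - (k:ℤ) = (J+1) + (-(k+1) : ℤ) by ring, zpow_add₀ (two_ne_zero)]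
    congr 1
    rw [one_div, inv_pow, ← zpow_natCast (2:ℝ) (k+1), ← zpow_neg]
    norm_num
  have hgeo : Summable (fun k : ℕ => ((1:ℝ)/2)^(k+1)) :=
    (summable_geometric_of_lt_one (by norm_num) (by norm_num)).comp_injective
      (add_left_injective 1)
  have hsumgeo : Summable (fun k : ℕ => (2:ℝ)^(J+1) * (1/2)^(k+1)) := hgeo.mul_left _
  have hmain : (∑' k : ℕ, (2:ℝ)^(J+1) * (1/2)^(k+1)) = 2^(J+1) := by
    rw [tsum_mul_left]
    have : (∑' k : ℕ, ((1:ℝ)/2)^(k+1)) = 1 := by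
      have h2 : (∑' k : ℕ, ((1:ℝ)/2)^(k+1)) = (∑' k : ℕ, ((1:ℝ)/2)^k) - 1 := by
        rw [Summable.tsum_eq_zero_add (summable_geometric_of_lt_one (by norm_num) (by norm_num))]
        simp
      rw [h2, tsum_geometric_of_lt_one (by norm_num) (by norm_num)]
      norm_num
    rw [this, mul_one]
  constructor
  · rw [← Function.Injective.summable_iff hinj
      (fun x hx => by by_contra h; exact hx (hsupp h))]
    rw [show ((fun i : ℤ => ind (i ≤ J) ((2:ℝ)^i)) ∘ (fun k : ℕ => J - (k:ℤ)))
        = fun k : ℕ => (2:ℝ)^(J+1) * (1/2)^(k+1) from hcomp]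
    exact hsumgeo
  · rw [← Function.Injective.tsum_eq hinj hsupp, hcomp, hmain]

private lemma sum_fin_ite0 (m : ℕ) (hm : 0 < m) (i : ℤ) (c : ℝ) :
    ∑ l : Fin m, ind (i % (m:ℤ) = ((l:ℕ):ℤ)) c = c := by
  have h0 : 0 ≤ i % (m:ℤ) := Int.emod_nonneg i (by exact_mod_cast hm.ne')
  have h1 : i % (m:ℤ) < m := Int.emod_lt_of_pos i (by exact_mod_cast hm)
  have hlt : (i % (m:ℤ)).toNat < m := by omega
  have key : ∀ l : Fin m, (i % (m:ℤ) = ((l:ℕ):ℤ)) ↔ l = ⟨(i % (m:ℤ)).toNat, hlt⟩ := by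
    intro l
    constructor
    · intro h; apply Fin.ext; show (l:ℕ) = (i % (m:ℤ)).toNat; omega
    · rintro rfl; show i % (m:ℤ) = (((i % (m:ℤ)).toNat : ℕ) : ℤ); omega
  calc ∑ l : Fin m, ind (i % (m:ℤ) = ((l:ℕ):ℤ)) c
      = ∑ l : Fin m, (if l = ⟨(i % (m:ℤ)).toNat, hlt⟩ then c else 0) :=
        Finset.sum_congr rfl (fun l _ => by
          by_cases h : i % (m:ℤ) = ((l:ℕ):ℤ)
          · rw [ind_pos h, if_pos ((key l).mp h)]
          · rw [ind_neg h, if_neg (fun hc => h ((key l).mpr hc))])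
    _ = c := by rw [Finset.sum_ite_eq' Finset.univ _ (fun _ => c), if_pos (Finset.mem_univ _)]


private lemma perclass0 (ε : ℝ) (hε : 0 < ε) (m : ℕ)
    (a d : ℤ → ℝ)
    (ha : ∀ i, a i = (2:ℝ)^i * d i) (hd : ∀ i, |d i| ≤ 1)
    (hA : Summable fun i => |a i|)
    (hmpow : 4 ≤ ε * 2^(m:ℕ))
    (P : ℤ → Prop) (hP : ∀ i j, P i → P j → i < j → i + (m:ℤ) ≤ j)
    (cond : ℤ → Prop) (hcond : ∀ i j, j < i → d j ≠ 0 → cond i) :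
    (∑' i, ind (P i) |a i|) ≤
      |∑' i, ind (P i) (a i)|
      + 2 * (∑' i, ind (P i ∧ cond i) ((2:ℝ)^i * (|d i| - (⌊|d i|⌋:ℝ))))
      + ε * (∑' i, ind (P i) |a i|) := by
  set w : ℤ → ℝ := fun i => (2:ℝ)^i * (|d i| - (⌊|d i|⌋:ℝ)) with hw_def
  have hpow : ∀ i : ℤ, (0:ℝ) < 2^i := fun i => zpow_pos (by norm_num) i
  have haa : ∀ i, |a i| = (2:ℝ)^i * |d i| := by
    intro i; rw [ha i, abs_mul, abs_of_pos (hpow i)]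
  have hw0 : ∀ i, 0 ≤ w i :=
    fun i => mul_nonneg (hpow i).le (by linarith [Int.floor_le |d i|])
  have hwa : ∀ i, w i ≤ |a i| := by
    intro i; rw [haa i]
    apply mul_le_mul_of_nonneg_left _ (hpow i).le
    have h1 : (0:ℤ) ≤ ⌊|d i|⌋ := Int.floor_nonneg.mpr (abs_nonneg _)
    have h2 : (0:ℝ) ≤ (⌊|d i|⌋:ℝ) := by exact_mod_cast h1
    linarith
  have hfrac1 : ∀ i, |d i| < 1 → w i = |a i| := by
    intro i hi
    rw [haa i, hw_def]
    have : ⌊|d i|⌋ = 0 := Int.floor_eq_zero_iff.mpr ⟨abs_nonneg _, hi⟩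
    simp [this]
  have hda : ∀ i, d i ≠ 0 → a i ≠ 0 := by
    intro i hdi
    rw [ha i]; exact mul_ne_zero (hpow i).ne' hdi
  have had : ∀ i, a i ≠ 0 → d i ≠ 0 := by
    intro i hai hdi; exact hai (by rw [ha i, hdi, mul_zero])
  set Q : ℤ → Prop := fun i => cond i ∧ |d i| < 1 with hQ_def
  -- summability helpers
  have sum_aR : ∀ R : ℤ → Prop, Summable (fun i => ind (R i) (a i)) :=
    fun R => summable_ind_of_le _ hA R (fun i _ => le_refl _)
  have sum_absR : ∀ R : ℤ → Prop, Summable (fun i => ind (R i) |a i|) :=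
    fun R => summable_ind_of_le _ hA R (fun i _ => by rw [abs_abs])
  have sum_wR : ∀ R : ℤ → Prop, Summable (fun i => ind (R i) (w i)) :=
    fun R => summable_ind_of_le _ hA R (fun i _ => by rw [abs_of_nonneg (hw0 i)]; exact hwa i)
  -- splits
  have hsplitS : (∑' i, ind (P i) |a i|) =
      (∑' i, ind (P i ∧ Q i) |a i|) + ∑' i, ind (P i ∧ ¬ Q i) |a i| :=
    tsum_ind_split _ P Q (sum_absR _) (sum_absR _)
  have hsplitT : (∑' i, ind (P i) (a i)) =
      (∑' i, ind (P i ∧ Q i) (a i)) + ∑' i, ind (P i ∧ ¬ Q i) (a i) :=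
    tsum_ind_split _ P Q (sum_aR _) (sum_aR _)
  set SG := ∑' i, ind (P i ∧ Q i) |a i| with hSG
  set SD := ∑' i, ind (P i ∧ ¬ Q i) |a i| with hSD
  set TG := ∑' i, ind (P i ∧ Q i) (a i) with hTG
  set TD := ∑' i, ind (P i ∧ ¬ Q i) (a i) with hTD
  set SP := ∑' i, ind (P i) |a i| with hSP
  have habs_tsum : ∀ R : ℤ → Prop, |∑' i, ind (R i) (a i)| ≤ ∑' i, ind (R i) |a i| := by
    intro R
    calc |∑' i, ind (R i) (a i)| ≤ ∑' i, |ind (R i) (a i)| := by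
          simpa [Real.norm_eq_abs] using norm_tsum_le_tsum_norm
            (f := fun i => ind (R i) (a i))
            (by simpa [Real.norm_eq_abs, abs_ind] using sum_absR R)
      _ = ∑' i, ind (R i) |a i| := tsum_congr (fun i => abs_ind _ _)
  -- Z ≥ SG
  have hZ : SG ≤ ∑' i, ind (P i ∧ cond i) (w i) := by
    have h1 : SG = ∑' i, ind (P i ∧ Q i) (w i) := by
      apply tsum_congr; intro i
      by_cases h : P i ∧ Q i
      · rw [ind_pos h, ind_pos h, hfrac1 i h.2.2]
      · rw [ind_neg h, ind_neg h]
    rw [h1]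
    apply Summable.tsum_le_tsum _ (sum_wR _) (sum_wR _)
    intro i
    by_cases h : P i ∧ Q i
    · rw [ind_pos h, ind_pos ⟨h.1, h.2.1⟩]
    · rw [ind_neg h]; exact ind_nonneg (hw0 i)
  have hTGle : |TG| ≤ SG := habs_tsum _
  have hSP_nonneg : 0 ≤ SP := tsum_nonneg (fun i => ind_nonneg (abs_nonneg _))
  -- core estimate : SD ≤ |TD| + ε * SP
  have hcore : SD ≤ |TD| + ε * SP := by
    by_cases hB : ∃ i, P i ∧ cond i ∧ |d i| = 1
    · -- get greatest such index
      have hbdd : ∃ b : ℤ, ∀ z : ℤ, (P z ∧ cond z ∧ |d z| = 1) → z ≤ b := by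
        obtain ⟨n, hn⟩ := exists_nat_gt (∑' i, |a i|)
        refine ⟨n, fun z hz => ?_⟩
        by_contra hzn
        push_neg at hzn
        have h2z : (2:ℝ)^z ≤ ∑' i, |a i| := by
          have := Summable.le_tsum hA z (fun j _ => abs_nonneg _)
          rwa [haa z, hz.2.2, mul_one] at this
        have hn2 : (n:ℝ) < 2^z := by
          calc (n:ℝ) < 2^(n:ℤ) := by
                exact_mod_cast Nat.lt_two_pow_self (n := n)
            _ ≤ 2^z := by
                apply zpow_le_zpow_right₀ (by norm_num)
                omega
        linarith
      obtain ⟨I, hI, hImax⟩ := Int.exists_greatest_of_bdd hbdd hB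
      have hdI : d I ≠ 0 := fun h => by rw [h, abs_zero] at hI; linarith [hI.2.2]
      have haI : |a I| = 2^I := by rw [haa I, hI.2.2, mul_one]
      have hDDI : P I ∧ ¬ Q I := ⟨hI.1, fun hq => absurd hI.2.2 (ne_of_lt hq.2)⟩
      -- elements of D other than I with nonzero a are ≤ I - m
      have hbelow : ∀ i, (P i ∧ ¬ Q i) → a i ≠ 0 → i ≠ I → i ≤ I - (m:ℤ) := by
        intro i hDi hai hiI
        have hdi : d i ≠ 0 := had i hai
        have hilt : i < I := by
          rcases lt_trichotomy i I with h | h | h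
          · exact h
          · exact absurd h hiI
          · exfalso
            have hci := hcond i I h hdI
            have hd1 : |d i| = 1 := le_antisymm (hd i) (by
              by_contra hlt
              push_neg at hlt
              exact hDi.2 ⟨hci, hlt⟩)
            have hle := hImax i ⟨hDi.1, hci, hd1⟩
            omega
        have := hP i I hDi.1 hI.1 hilt
        omega
      -- tail bound
      have htail : (∑' i, ind ((P i ∧ ¬ Q i) ∧ ¬ (i = I)) |a i|) ≤ 2^(I - (m:ℤ) + 1) := by
        rw [← (geom_summable0 (I - (m:ℤ))).2]
        apply Summable.tsum_le_tsum _ (sum_absR _) (geom_summable0 (I - (m:ℤ))).1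
        intro i
        by_cases h : (P i ∧ ¬ Q i) ∧ ¬ (i = I)
        · rw [ind_pos h]
          by_cases hz : a i = 0
          · rw [hz, abs_zero]; exact ind_nonneg (hpow i).le
          · have hle : i ≤ I - (m:ℤ) := hbelow i h.1 hz h.2
            rw [ind_pos hle]
            calc |a i| = 2^i * |d i| := haa i
              _ ≤ 2^i * 1 := mul_le_mul_of_nonneg_left (hd i) (hpow i).le
              _ = 2^i := mul_one _
        · rw [ind_neg h]; exact ind_nonneg (hpow i).le
      -- split TD and SD at I
      have hsplitTD : TD = (∑' i, ind ((P i ∧ ¬ Q i) ∧ i = I) (a i))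
          + ∑' i, ind ((P i ∧ ¬ Q i) ∧ ¬ (i = I)) (a i) :=
        tsum_ind_split _ _ _ (sum_aR _) (sum_aR _)
      have hsplitSD : SD = (∑' i, ind ((P i ∧ ¬ Q i) ∧ i = I) |a i|)
          + ∑' i, ind ((P i ∧ ¬ Q i) ∧ ¬ (i = I)) |a i| :=
        tsum_ind_split _ _ _ (sum_absR _) (sum_absR _)
      have hsingle : (∑' i, ind ((P i ∧ ¬ Q i) ∧ i = I) (a i)) = a I := by
        rw [tsum_eq_single I (fun b hb => ind_neg (fun hc => hb hc.2) _)]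
        exact ind_pos ⟨hDDI, rfl⟩ _
      have hsingle2 : (∑' i, ind ((P i ∧ ¬ Q i) ∧ i = I) |a i|) = |a I| := by
        rw [tsum_eq_single I (fun b hb => ind_neg (fun hc => hb hc.2) _)]
        exact ind_pos ⟨hDDI, rfl⟩ _
      -- ε * SP ≥ ε * 2^I ≥ 4 * 2^(I-m)
      have hSPI : (2:ℝ)^I ≤ SP := by
        have := Summable.le_tsum (sum_absR P) I (fun j _ => ind_nonneg (abs_nonneg _))
        rwa [ind_pos hI.1, haI] at this
      have hepsI : (4:ℝ) * 2^(I - (m:ℤ)) ≤ ε * SP := by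
        have h1 : ε * 2^I = (ε * 2^(m:ℕ)) * 2^(I - (m:ℤ)) := by
          rw [mul_assoc, ← zpow_natCast (2:ℝ) m, ← zpow_add₀ (two_ne_zero : (2:ℝ) ≠ 0)]
          congr 2
          omega
        have h2 : (4:ℝ) * 2^(I - (m:ℤ)) ≤ (ε * 2^(m:ℕ)) * 2^(I - (m:ℤ)) :=
          mul_le_mul_of_nonneg_right hmpow (hpow _).le
        calc (4:ℝ) * 2^(I - (m:ℤ)) ≤ ε * 2^I := by rw [h1]; exact h2
          _ ≤ ε * SP := mul_le_mul_of_nonneg_left hSPI hε.le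
      have habsrest : |∑' i, ind ((P i ∧ ¬ Q i) ∧ ¬ (i = I)) (a i)|
          ≤ ∑' i, ind ((P i ∧ ¬ Q i) ∧ ¬ (i = I)) |a i| := habs_tsum _
      have hTDlow : (2:ℝ)^I - (∑' i, ind ((P i ∧ ¬ Q i) ∧ ¬ (i = I)) |a i|) ≤ |TD| := by
        rw [hsplitTD, hsingle]
        have h1 : |a I| - |∑' i, ind ((P i ∧ ¬ Q i) ∧ ¬ (i = I)) (a i)|
            ≤ |a I + ∑' i, ind ((P i ∧ ¬ Q i) ∧ ¬ (i = I)) (a i)| := by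
          have := abs_add_le (a I + ∑' i, ind ((P i ∧ ¬ Q i) ∧ ¬ (i = I)) (a i))
            (-(∑' i, ind ((P i ∧ ¬ Q i) ∧ ¬ (i = I)) (a i)))
          simp only [add_neg_cancel_right, abs_neg] at this
          linarith
        rw [haI] at h1
        linarith [habsrest]
      have hgeo2 : (2:ℝ)^(I - (m:ℤ) + 1) + 2^(I - (m:ℤ) + 1) = 4 * 2^(I - (m:ℤ)) := by
        rw [zpow_add_one₀ (two_ne_zero : (2:ℝ) ≠ 0)]
        ring
      rw [hsplitSD, hsingle2, haI]
      have hTL := htail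
      linarith
    · -- no "big" terms: |TD| = SD exactly
      push_neg at hB
      have heq : |TD| = SD := by
        rw [hTD, hSD]
        rw [show (∑' i, ind (P i ∧ ¬ Q i) |a i|) = ∑' i, |ind (P i ∧ ¬ Q i) (a i)| from
          tsum_congr (fun i => (abs_ind _ _).symm)]
        apply abs_tsum_subsingleton0
        intro i j hi hj
        have hDi : (P i ∧ ¬ Q i) ∧ a i ≠ 0 := by
          by_cases h : P i ∧ ¬ Q i
          · exact ⟨h, by rwa [ind_pos h] at hi⟩
          · rw [ind_neg h] at hi; exact absurd rfl hi
        have hDj : (P j ∧ ¬ Q j) ∧ a j ≠ 0 := by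
          by_cases h : P j ∧ ¬ Q j
          · exact ⟨h, by rwa [ind_pos h] at hj⟩
          · rw [ind_neg h] at hj; exact absurd rfl hj
        have hnc : ∀ k, (P k ∧ ¬ Q k) → a k ≠ 0 → ¬ cond k := by
          intro k hk hak hck
          have hd1 : |d k| = 1 := le_antisymm (hd k) (by
            by_contra hlt
            push_neg at hlt
            exact hk.2 ⟨hck, hlt⟩)
          exact hB k hk.1 hck hd1
        rcases lt_trichotomy i j with h | h | h
        · exact absurd (hcond j i h (had i hDi.2)) (hnc j hDj.1 hDj.2)
        · exact h
        · exact absurd (hcond i j h (had j hDj.2)) (hnc i hDi.1 hDi.2)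
      rw [heq]
      nlinarith
  -- combine
  have hTP : |TD| - |TG| ≤ |∑' i, ind (P i) (a i)| := by
    rw [hsplitT]
    have h2 := abs_add_le (TG + TD) (-TG)
    simp only [abs_neg] at h2
    have h3 : TG + TD + -TG = TD := by ring
    rw [h3] at h2
    linarith
  have hgoal_w : (∑' i, ind (P i ∧ cond i) ((2:ℝ)^i * (|d i| - (⌊|d i|⌋:ℝ))))
      = ∑' i, ind (P i ∧ cond i) (w i) := rfl
  rw [hgoal_w, hsplitS]
  rw [hsplitS] at hcore
  linarith [hTGle, hcore, hTP, hZ, hsplitS]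


private lemma abs_tsum_ind_le {a : ℤ → ℝ} (hA : Summable fun i => |a i|) (R : ℤ → Prop) :
    |∑' i, ind (R i) (a i)| ≤ ∑' i, ind (R i) |a i| := by
  calc |∑' i, ind (R i) (a i)| ≤ ∑' i, |ind (R i) (a i)| := by
        simpa [Real.norm_eq_abs] using norm_tsum_le_tsum_norm
          (f := fun i => ind (R i) (a i))
          (by simpa [Real.norm_eq_abs, abs_ind] using
            summable_ind_of_le (a := a) _ hA R (fun i _ => by rw [abs_abs]))
    _ = ∑' i, ind (R i) |a i| := tsum_congr (fun i => abs_ind _ _)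

/-- Lemma 3.4: combining scales.  Given functions `f_i : X → [0,1]` with
`Σ_i 2^i |f_i(x) − f_i(y)| < ∞`, there is a map `F` into `ℓ₁` of dimension
`2 + ⌈log₂(1/ε)⌉` with
`(1−ε)·Σ_i 2^i|f_i(x)−f_i(y)| − 2ζ(x,y) ≤ ‖F(x)−F(y)‖₁ ≤ Σ_i 2^i|f_i(x)−f_i(y)|`. -/
theorem multiscale_combination (ε : ℝ) (hε : 0 < ε) (hε1 : ε < 1)
    (X : Type) [MetricSpace X] (f : ℤ → X → ℝ)
    (hf : ∀ (i : ℤ) (x : X), f i x ∈ Set.Icc (0 : ℝ) 1)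
    (hsum : ∀ x y : X, Summable fun i : ℤ => (2 : ℝ) ^ i * |f i x - f i y|) :
    ∃ F : X → Fin (2 + ⌈Real.logb 2 (1 / ε)⌉₊) → ℝ,
      ∀ x y : X,
        ((1 - ε) * (∑' i : ℤ, (2 : ℝ) ^ i * |f i x - f i y|) -
            2 * (∑' i : ℤ,
              if ∃ j : ℤ, j < i ∧ f j x - f j y ≠ 0 then
                (2 : ℝ) ^ i * (|f i x - f i y| - (⌊|f i x - f i y|⌋ : ℝ))
              else 0) ≤
          ∑ l, |F x l - F y l|) ∧
        ∑ l, |F x l - F y l| ≤ ∑' i : ℤ, (2 : ℝ) ^ i * |f i x - f i y| := by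
  set m : ℕ := 2 + ⌈Real.logb 2 (1 / ε)⌉₊ with hm_def
  have hm0 : 0 < m := by omega
  have hmpow : 4 ≤ ε * 2^(m:ℕ) := by
    have h1 : Real.logb 2 (1/ε) ≤ ((⌈Real.logb 2 (1/ε)⌉₊ : ℕ) : ℝ) := Nat.le_ceil _
    have h2 : (1:ℝ)/ε ≤ 2^(⌈Real.logb 2 (1/ε)⌉₊ : ℕ) := by
      calc (1:ℝ)/ε = 2 ^ Real.logb 2 (1/ε) := by
            rw [Real.rpow_logb (by norm_num) (by norm_num) (by positivity)]
        _ ≤ (2:ℝ) ^ (((⌈Real.logb 2 (1/ε)⌉₊ : ℕ)) : ℝ) :=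
            Real.rpow_le_rpow_of_exponent_le (by norm_num) h1
        _ = 2^(⌈Real.logb 2 (1/ε)⌉₊ : ℕ) := by rw [Real.rpow_natCast]
    have h3 : (2:ℝ)^m = 4 * 2^(⌈Real.logb 2 (1/ε)⌉₊ : ℕ) := by
      rw [hm_def, pow_add]; norm_num
    have h4 : 4 * ((1:ℝ)/ε) ≤ 4 * 2^(⌈Real.logb 2 (1/ε)⌉₊ : ℕ) := by linarith
    calc (4:ℝ) = ε * (4 * (1/ε)) := by field_simp
      _ ≤ ε * (4 * 2^(⌈Real.logb 2 (1/ε)⌉₊ : ℕ)) :=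
          mul_le_mul_of_nonneg_left h4 hε.le
      _ = ε * 2^m := by rw [h3]
  rcases isEmpty_or_nonempty X with hX | hX
  · exact ⟨fun _ _ => 0, fun x => (IsEmpty.false x).elim⟩
  obtain ⟨x0⟩ := hX
  refine ⟨fun z l => ∑' i : ℤ, ind (i % (m:ℤ) = ((l:ℕ):ℤ)) ((2:ℝ)^i * (f i z - f i x0)), ?_⟩
  intro x y
  -- basic objects
  have hd : ∀ i : ℤ, |f i x - f i y| ≤ 1 := by
    intro i
    have h1 := hf i x
    have h2 := hf i y
    simp only [Set.mem_Icc] at h1 h2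
    rw [abs_sub_le_iff]
    constructor <;> linarith
  have hpow : ∀ i : ℤ, (0:ℝ) < 2^i := fun i => zpow_pos (by norm_num) i
  have haa : ∀ z z' : X, ∀ i : ℤ,
      |(2:ℝ)^i * (f i z - f i z')| = (2:ℝ)^i * |f i z - f i z'| := by
    intro z z' i; rw [abs_mul, abs_of_pos (hpow i)]
  have hA : Summable fun i : ℤ => |(2:ℝ)^i * (f i x - f i y)| :=
    (hsum x y).congr (fun i => (haa x y i).symm)
  have hAx : ∀ z : X, Summable fun i : ℤ => |(2:ℝ)^i * (f i z - f i x0)| :=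
    fun z => (hsum z x0).congr (fun i => (haa z x0 i).symm)
  -- difference of coordinates
  have hFd : ∀ l : Fin m,
      (∑' i : ℤ, ind (i % (m:ℤ) = ((l:ℕ):ℤ)) ((2:ℝ)^i * (f i x - f i x0)))
      - (∑' i : ℤ, ind (i % (m:ℤ) = ((l:ℕ):ℤ)) ((2:ℝ)^i * (f i y - f i x0)))
      = ∑' i : ℤ, ind (i % (m:ℤ) = ((l:ℕ):ℤ)) ((2:ℝ)^i * (f i x - f i y)) := by
    intro l
    rw [← Summable.tsum_sub
      (summable_ind_of_le _ (hAx x) _ (fun i _ => le_refl _))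
      (summable_ind_of_le _ (hAx y) _ (fun i _ => le_refl _))]
    apply tsum_congr
    intro i
    by_cases h : i % (m:ℤ) = ((l:ℕ):ℤ)
    · rw [ind_pos h, ind_pos h, ind_pos h]; ring
    · rw [ind_neg h, ind_neg h, ind_neg h]; ring
  -- per-class inequality
  have key : ∀ l : Fin m,
      (∑' i, ind (i % (m:ℤ) = ((l:ℕ):ℤ)) |(2:ℝ)^i * (f i x - f i y)|) ≤
        |∑' i, ind (i % (m:ℤ) = ((l:ℕ):ℤ)) ((2:ℝ)^i * (f i x - f i y))|
        + 2 * (∑' i, ind ((i % (m:ℤ) = ((l:ℕ):ℤ)) ∧ (∃ j : ℤ, j < i ∧ f j x - f j y ≠ 0))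
            ((2:ℝ)^i * (|f i x - f i y| - (⌊|f i x - f i y|⌋:ℝ))))
        + ε * (∑' i, ind (i % (m:ℤ) = ((l:ℕ):ℤ)) |(2:ℝ)^i * (f i x - f i y)|) := by
    intro l
    apply perclass0 ε hε m _ (fun i => f i x - f i y) (fun i => rfl) hd hA hmpow
    · intro i j hi hj hij
      have hmod : ((m:ℕ):ℤ) ∣ (j - i) :=
        Int.ModEq.dvd (show Int.ModEq ((m:ℕ):ℤ) i j from hi.trans hj.symm)
      obtain ⟨k, hk⟩ := hmod
      have hm' : (0:ℤ) < ((m:ℕ):ℤ) := by exact_mod_cast hm0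
      have hk1 : 1 ≤ k := by
        by_contra hcon
        push_neg at hcon
        have h0 : ((m:ℕ):ℤ) * k ≤ 0 :=
          mul_nonpos_iff.mpr (Or.inl ⟨hm'.le, by omega⟩)
        linarith
      have hmk : ((m:ℕ):ℤ) ≤ ((m:ℕ):ℤ) * k := le_mul_of_one_le_right hm'.le hk1
      linarith
    · intro i j h1 h2
      exact ⟨j, h1, h2⟩
  -- aggregation
  have hSagg : (∑ l : Fin m, ∑' i, ind (i % (m:ℤ) = ((l:ℕ):ℤ)) |(2:ℝ)^i * (f i x - f i y)|)
      = ∑' i : ℤ, |(2:ℝ)^i * (f i x - f i y)| := by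
    rw [← Summable.tsum_finsetSum (fun l _ => summable_ind_of_le _ hA _ (fun i _ => by rw [abs_abs]))]
    exact tsum_congr (fun i => sum_fin_ite0 m hm0 i _)
  have hw0 : ∀ i : ℤ, 0 ≤ (2:ℝ)^i * (|f i x - f i y| - (⌊|f i x - f i y|⌋:ℝ)) :=
    fun i => mul_nonneg (hpow i).le (by linarith [Int.floor_le |f i x - f i y|])
  have hwa : ∀ i : ℤ, (2:ℝ)^i * (|f i x - f i y| - (⌊|f i x - f i y|⌋:ℝ))
      ≤ |(2:ℝ)^i * (f i x - f i y)| := by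
    intro i
    rw [haa x y i]
    apply mul_le_mul_of_nonneg_left _ (hpow i).le
    have h1 : (0:ℤ) ≤ ⌊|f i x - f i y|⌋ := Int.floor_nonneg.mpr (abs_nonneg _)
    have h2 : (0:ℝ) ≤ (⌊|f i x - f i y|⌋:ℝ) := by exact_mod_cast h1
    linarith
  have hZagg : (∑ l : Fin m, ∑' i,
        ind ((i % (m:ℤ) = ((l:ℕ):ℤ)) ∧ (∃ j : ℤ, j < i ∧ f j x - f j y ≠ 0))
          ((2:ℝ)^i * (|f i x - f i y| - (⌊|f i x - f i y|⌋:ℝ))))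
      = ∑' i : ℤ, ind (∃ j : ℤ, j < i ∧ f j x - f j y ≠ 0)
          ((2:ℝ)^i * (|f i x - f i y| - (⌊|f i x - f i y|⌋:ℝ))) := by
    rw [← Summable.tsum_finsetSum (fun l _ => summable_ind_of_le _ hA _
      (fun i _ => by rw [abs_of_nonneg (hw0 i)]; exact hwa i))]
    apply tsum_congr
    intro i
    by_cases hc : ∃ j : ℤ, j < i ∧ f j x - f j y ≠ 0
    · rw [ind_pos hc]
      rw [show (∑ l : Fin m, ind ((i % (m:ℤ) = ((l:ℕ):ℤ)) ∧ (∃ j : ℤ, j < i ∧ f j x - f j y ≠ 0))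
            ((2:ℝ)^i * (|f i x - f i y| - (⌊|f i x - f i y|⌋:ℝ))))
          = ∑ l : Fin m, ind (i % (m:ℤ) = ((l:ℕ):ℤ))
            ((2:ℝ)^i * (|f i x - f i y| - (⌊|f i x - f i y|⌋:ℝ))) from
        Finset.sum_congr rfl (fun l _ => by
          by_cases h : i % (m:ℤ) = ((l:ℕ):ℤ)
          · rw [ind_pos h, ind_pos ⟨h, hc⟩]
          · rw [ind_neg h, ind_neg (fun hh => h hh.1)])]
      exact sum_fin_ite0 m hm0 i _
    · rw [ind_neg hc]
      apply Finset.sum_eq_zero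
      intro l _
      exact ind_neg (fun hh => hc hh.2) _
  -- convert goal tsums
  have hS_goal : (∑' i : ℤ, (2:ℝ)^i * |f i x - f i y|)
      = ∑' i : ℤ, |(2:ℝ)^i * (f i x - f i y)| :=
    tsum_congr (fun i => (haa x y i).symm)
  have hZ_goal : (∑' i : ℤ,
        if ∃ j : ℤ, j < i ∧ f j x - f j y ≠ 0 then
          (2:ℝ)^i * (|f i x - f i y| - (⌊|f i x - f i y|⌋:ℝ)) else 0)
      = ∑' i : ℤ, ind (∃ j : ℤ, j < i ∧ f j x - f j y ≠ 0)
          ((2:ℝ)^i * (|f i x - f i y| - (⌊|f i x - f i y|⌋:ℝ))) := by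
    apply tsum_congr
    intro i
    by_cases hc : ∃ j : ℤ, j < i ∧ f j x - f j y ≠ 0
    · rw [if_pos hc, ind_pos hc]
    · rw [if_neg hc, ind_neg hc]
  have hF_goal : (∑ l : Fin m,
      |(∑' i : ℤ, ind (i % (m:ℤ) = ((l:ℕ):ℤ)) ((2:ℝ)^i * (f i x - f i x0)))
        - ∑' i : ℤ, ind (i % (m:ℤ) = ((l:ℕ):ℤ)) ((2:ℝ)^i * (f i y - f i x0))|)
      = ∑ l : Fin m, |∑' i : ℤ, ind (i % (m:ℤ) = ((l:ℕ):ℤ)) ((2:ℝ)^i * (f i x - f i y))| :=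
    Finset.sum_congr rfl (fun l _ => by rw [hFd l])
  constructor
  · -- lower bound
    rw [hS_goal, hZ_goal, hF_goal]
    have hsummed := Finset.sum_le_sum (fun l _ => key l) (s := Finset.univ)
    rw [Finset.sum_add_distrib, Finset.sum_add_distrib, ← Finset.mul_sum, ← Finset.mul_sum,
      hSagg, hZagg] at hsummed
    linarith
  · -- upper bound
    rw [hS_goal, hF_goal, ← hSagg]
    apply Finset.sum_le_sum
    intro l _
    exact abs_tsum_ind_le hA _
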